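/- In the information causality causal structure, where X₀ and X₁ are independent, M is a function of (X₀,X₁) possibly with independent local randomness, and (Y₀,Y₁) depend only on M (i.e., (X₀,X₁) ⊥ (Y₀,Y₁) | M), the inequality I(X₀:Y₀) + I(X₁:Y₁) ≤ H(M) holds, assuming additionally I(X₀:X₁)=0 and the data-processing structure I(X₀X₁ : Y₀Y₁ | M) = 0. -/

import Mathlib

open Finset

/-- The marginal distribution (pushforward) of `P` along the map `f`. -/
noncomputable def margF {Ω α : Type} [Fintype Ω] [DecidableEq α]
    (P : Ω → ℝ) (f : Ω → α) : α → ℝ :=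
  fun a => ∑ w, if f w = a then P w else 0

/-- Shannon entropy (in bits) of a finitely supported distribution. -/
noncomputable def ent {α : Type} [Fintype α] (q : α → ℝ) : ℝ :=
  -∑ a, q a * Real.logb 2 (q a)

/-- Shannon entropy of the marginal of `P` on the variable(s) extracted by `f`. -/
noncomputable def Hof {Ω α : Type} [Fintype Ω] [Fintype α] [DecidableEq α]
    (P : Ω → ℝ) (f : Ω → α) : ℝ :=
  ent (margF P f)

/-- Conditional mutual information `I(A:B|C) = H(A,C) + H(B,C) − H(A,B,C) − H(C)` of the
variables extracted by `fA`, `fB` given those extracted by `fC`. -/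
noncomputable def CMI {Ω A B C : Type} [Fintype Ω] [Fintype A] [Fintype B] [Fintype C]
    [DecidableEq A] [DecidableEq B] [DecidableEq C]
    (P : Ω → ℝ) (fA : Ω → A) (fB : Ω → B) (fC : Ω → C) : ℝ :=
  Hof P (fun w => (fA w, fC w)) + Hof P (fun w => (fB w, fC w)) -
    Hof P (fun w => (fA w, fB w, fC w)) - Hof P fC

/-- Mutual information `I(A:B) = H(A) + H(B) − H(A,B)` of the variables extracted by
`fA` and `fB`. -/
noncomputable def MI {Ω A B : Type} [Fintype Ω] [Fintype A] [Fintype B]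
    [DecidableEq A] [DecidableEq B] (P : Ω → ℝ) (fA : Ω → A) (fB : Ω → B) : ℝ :=
  Hof P fA + Hof P fB - Hof P (fun w => (fA w, fB w))

section ICAux

variable {Ω : Type} [Fintype Ω] (P : Ω → ℝ)

private lemma margF_nonneg {α : Type} [DecidableEq α] (h0 : ∀ w, 0 ≤ P w) (f : Ω → α) (a : α) :
    0 ≤ margF P f a := by
  apply Finset.sum_nonneg
  intro w _
  by_cases h : f w = a <;> simp [h, h0 w]

private lemma margF_sum {α : Type} [Fintype α] [DecidableEq α] (f : Ω → α) :
    ∑ a, margF P f a = ∑ w, P w := by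
  unfold margF
  rw [Finset.sum_comm]
  apply Finset.sum_congr rfl
  intro w _
  simp [Finset.sum_ite_eq]

private lemma le_margF {α : Type} [DecidableEq α] (h0 : ∀ w, 0 ≤ P w) (f : Ω → α) (w : Ω) :
    P w ≤ margF P f (f w) := by
  have := Finset.single_le_sum (f := fun w' => if f w' = f w then P w' else 0)
    (fun i _ => by by_cases h : f i = f w <;> simp [h, h0 i]) (Finset.mem_univ w)
  simpa [margF] using this

private lemma sum_margF_mul {α : Type} [Fintype α] [DecidableEq α] (f : Ω → α) (G : α → ℝ) :
    ∑ a, margF P f a * G a = ∑ w, P w * G (f w) := by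
  simp only [margF, Finset.sum_mul, ite_mul, zero_mul]
  rw [Finset.sum_comm]
  apply Finset.sum_congr rfl
  intro w _
  simp [Finset.sum_ite_eq]

private lemma Hof_eq {α : Type} [Fintype α] [DecidableEq α] (f : Ω → α) :
    Hof P f = -∑ w, P w * Real.logb 2 (margF P f (f w)) := by
  unfold Hof ent
  rw [sum_margF_mul P f (fun a => Real.logb 2 (margF P f a))]

private lemma margF_comp_inj {α β : Type} [DecidableEq α] [DecidableEq β] (f : Ω → α) (g : α → β)
    (hg : Function.Injective g) (a : α) :
    margF P (fun w => g (f w)) (g a) = margF P f a := by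
  unfold margF
  apply Finset.sum_congr rfl
  intro w _
  simp [hg.eq_iff]

private lemma Hof_recode {α β : Type} [Fintype α] [DecidableEq α] [Fintype β] [DecidableEq β]
    (f : Ω → α) (g : α → β) (hg : Function.Injective g) :
    Hof P (fun w => g (f w)) = Hof P f := by
  rw [Hof_eq, Hof_eq]
  congr 1
  apply Finset.sum_congr rfl
  intro w _
  rw [margF_comp_inj P f g hg]

private lemma Hof_swap {α β : Type} [Fintype α] [DecidableEq α] [Fintype β] [DecidableEq β]
    (f : Ω → α) (g : Ω → β) :
    Hof P (fun w => (f w, g w)) = Hof P (fun w => (g w, f w)) := by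
  exact Hof_recode P (fun w => (g w, f w)) (fun p => (p.2, p.1))
    (fun p q h => by simpa [Prod.ext_iff, and_comm] using h)

private lemma margF_pair_le_left {α β : Type} [DecidableEq α] [DecidableEq β]
    (h0 : ∀ w, 0 ≤ P w) (f : Ω → α) (g : Ω → β) (a : α) (b : β) :
    margF P (fun w => (f w, g w)) (a, b) ≤ margF P f a := by
  apply Finset.sum_le_sum
  intro w _
  by_cases h : (f w, g w) = (a, b)
  · have hf : f w = a := (Prod.ext_iff.mp h).1
    have hg : g w = b := (Prod.ext_iff.mp h).2
    simp [h, hf, hg]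
  · simp only [h, if_neg h]
    by_cases h2 : f w = a <;> simp [h2, h0 w]

private lemma margF_pair_fst_sum {α β : Type} [Fintype α] [DecidableEq α] [DecidableEq β]
    (f : Ω → α) (g : Ω → β) (b : β) :
    ∑ a, margF P (fun w => (f w, g w)) (a, b) = margF P g b := by
  unfold margF
  rw [Finset.sum_comm]
  apply Finset.sum_congr rfl
  intro w _
  simp only [Prod.mk.injEq, ite_and]
  rw [Finset.sum_ite_eq univ (f w) (fun _ => if g w = b then P w else 0)]
  simp

private lemma Hof_le_pair {α β : Type} [Fintype α] [DecidableEq α] [Fintype β] [DecidableEq β]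
    (h0 : ∀ w, 0 ≤ P w) (f : Ω → α) (g : Ω → β) :
    Hof P f ≤ Hof P (fun w => (f w, g w)) := by
  rw [Hof_eq, Hof_eq]
  rw [neg_le_neg_iff]
  apply Finset.sum_le_sum
  intro w _
  rcases eq_or_lt_of_le (h0 w) with h | h
  · rw [← h]; simp
  · apply mul_le_mul_of_nonneg_left _ (h0 w)
    apply Real.logb_le_logb_of_le one_lt_two
    · exact lt_of_lt_of_le h (le_margF P h0 _ w)
    · exact margF_pair_le_left P h0 f g (f w) (g w)

private lemma CMI_nonneg {A B C : Type} [Fintype A] [Fintype B] [Fintype C]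
    [DecidableEq A] [DecidableEq B] [DecidableEq C]
    (h0 : ∀ w, 0 ≤ P w) (h1 : ∑ w, P w = 1)
    (fA : Ω → A) (fB : Ω → B) (fC : Ω → C) :
    0 ≤ CMI P fA fB fC := by
  classical
  set pAC := margF P (fun w => (fA w, fC w)) with hpAC
  set pBC := margF P (fun w => (fB w, fC w)) with hpBC
  set pABC := margF P (fun w => (fA w, fB w, fC w)) with hpABC
  set pC := margF P fC with hpC
  set r : A × B × C → ℝ :=
    fun v => pAC (v.1, v.2.2) * pBC (v.2.1, v.2.2) / (pABC v * pC v.2.2) with hr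
  have hlog2 : (0:ℝ) < Real.log 2 := Real.log_pos one_lt_two
  -- Step 1 : CMI as a single sum
  have key1 : CMI P fA fB fC = ∑ w, P w *
      (Real.logb 2 (pABC (fA w, fB w, fC w)) + Real.logb 2 (pC (fC w))
        - Real.logb 2 (pAC (fA w, fC w)) - Real.logb 2 (pBC (fB w, fC w))) := by
    unfold CMI
    rw [Hof_eq, Hof_eq, Hof_eq, Hof_eq]
    simp only [mul_add, mul_sub, Finset.sum_add_distrib, Finset.sum_sub_distrib]
    ring
  -- Step 2 : pointwise lower bound
  have key2 : ∀ w, (P w - P w * r (fA w, fB w, fC w)) / Real.log 2 ≤ P w *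
      (Real.logb 2 (pABC (fA w, fB w, fC w)) + Real.logb 2 (pC (fC w))
        - Real.logb 2 (pAC (fA w, fC w)) - Real.logb 2 (pBC (fB w, fC w))) := by
    intro w
    rcases eq_or_lt_of_le (h0 w) with h | h
    · rw [← h]; simp
    · have hABC : 0 < pABC (fA w, fB w, fC w) :=
        lt_of_lt_of_le h (le_margF P h0 (fun w => (fA w, fB w, fC w)) w)
      have hC : 0 < pC (fC w) := lt_of_lt_of_le h (le_margF P h0 fC w)
      have hAC : 0 < pAC (fA w, fC w) :=
        lt_of_lt_of_le h (le_margF P h0 (fun w => (fA w, fC w)) w)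
      have hBC : 0 < pBC (fB w, fC w) :=
        lt_of_lt_of_le h (le_margF P h0 (fun w => (fB w, fC w)) w)
      have hrpos : 0 < r (fA w, fB w, fC w) := by
        rw [hr]
        exact div_pos (mul_pos hAC hBC) (mul_pos hABC hC)
      have hlogr : Real.logb 2 (r (fA w, fB w, fC w)) =
          Real.logb 2 (pAC (fA w, fC w)) + Real.logb 2 (pBC (fB w, fC w))
            - Real.logb 2 (pABC (fA w, fB w, fC w)) - Real.logb 2 (pC (fC w)) := by
        rw [hr]
        simp only [Real.logb]
        rw [Real.log_div (by positivity) (by positivity),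
          Real.log_mul hAC.ne' hBC.ne', Real.log_mul hABC.ne' hC.ne']
        ring
      have hlb : Real.log (r (fA w, fB w, fC w)) ≤ r (fA w, fB w, fC w) - 1 :=
        Real.log_le_sub_one_of_pos hrpos
      have hstep : (1 - r (fA w, fB w, fC w)) / Real.log 2 ≤
          - Real.logb 2 (r (fA w, fB w, fC w)) := by
        rw [Real.logb, ← neg_div, div_le_div_iff_of_pos_right hlog2]
        linarith
      calc (P w - P w * r (fA w, fB w, fC w)) / Real.log 2
          = P w * ((1 - r (fA w, fB w, fC w)) / Real.log 2) := by ring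
        _ ≤ P w * (- Real.logb 2 (r (fA w, fB w, fC w))) :=
            mul_le_mul_of_nonneg_left hstep (h0 w)
        _ = P w * (Real.logb 2 (pABC (fA w, fB w, fC w)) + Real.logb 2 (pC (fC w))
            - Real.logb 2 (pAC (fA w, fC w)) - Real.logb 2 (pBC (fB w, fC w))) := by
            rw [hlogr]; ring
  -- Step 3 : the correction sum is at most 1
  have key3 : ∑ w, P w * r (fA w, fB w, fC w) ≤ 1 := by
    rw [← sum_margF_mul P (fun w => (fA w, fB w, fC w)) r]
    have step : ∀ v : A × B × C, pABC v * r v ≤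
        pAC (v.1, v.2.2) * pBC (v.2.1, v.2.2) / pC v.2.2 := by
      intro v
      rcases eq_or_lt_of_le (margF_nonneg P h0 (fun w => (fA w, fB w, fC w)) v) with h | h
      · rw [hpABC, ← h, zero_mul]
        exact div_nonneg (mul_nonneg (margF_nonneg P h0 _ _) (margF_nonneg P h0 _ _))
          (margF_nonneg P h0 _ _)
      · rcases eq_or_lt_of_le (margF_nonneg P h0 fC v.2.2) with hc | hc
        · rw [hr]
          simp [hpC, ← hc]
        · apply le_of_eq
          rw [hr]
          field_simp
          have hne : pABC v ≠ 0 := h.ne'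
          linear_combination (pAC (v.1, v.2.2) * pBC (v.2.1, v.2.2) * (pC v.2.2)⁻¹) * mul_inv_cancel₀ hne
    have sum2 : ∑ v : A × B × C, pAC (v.1, v.2.2) * pBC (v.2.1, v.2.2) / pC v.2.2 = 1 := by
      rw [Fintype.sum_prod_type]
      have swap1 : ∀ a : A, ∑ bc : B × C, pAC (a, bc.2) * pBC (bc.1, bc.2) / pC bc.2
          = ∑ c : C, pAC (a, c) * (∑ b : B, pBC (b, c)) / pC c := by
        intro a
        rw [Fintype.sum_prod_type, Finset.sum_comm]
        apply Finset.sum_congr rfl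
        intro c _
        rw [Finset.mul_sum, Finset.sum_div]
      calc ∑ a : A, ∑ bc : B × C, pAC (a, bc.2) * pBC (bc.1, bc.2) / pC bc.2
          = ∑ a : A, ∑ c : C, pAC (a, c) * (∑ b : B, pBC (b, c)) / pC c := by
            exact Finset.sum_congr rfl (fun a _ => swap1 a)
        _ = ∑ c : C, (∑ a : A, pAC (a, c)) * (∑ b : B, pBC (b, c)) / pC c := by
            rw [Finset.sum_comm]
            apply Finset.sum_congr rfl
            intro c _
            rw [Finset.sum_mul, Finset.sum_div]
        _ = ∑ c : C, pC c * pC c / pC c := by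
            apply Finset.sum_congr rfl
            intro c _
            rw [hpAC, hpBC, hpC, margF_pair_fst_sum, margF_pair_fst_sum]
        _ = ∑ c : C, pC c := by
            apply Finset.sum_congr rfl
            intro c _
            rcases eq_or_ne (pC c) 0 with hc | hc
            · simp [hc]
            · rw [mul_div_assoc, div_self hc, mul_one]
        _ = 1 := by rw [hpC, margF_sum P fC, h1]
    calc ∑ v : A × B × C, pABC v * r v
        ≤ ∑ v : A × B × C, pAC (v.1, v.2.2) * pBC (v.2.1, v.2.2) / pC v.2.2 :=
          Finset.sum_le_sum (fun v _ => step v)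
      _ = 1 := sum2
  -- assemble
  have hfin : (1 - ∑ w, P w * r (fA w, fB w, fC w)) / Real.log 2 ≤ CMI P fA fB fC := by
    rw [key1]
    calc (1 - ∑ w, P w * r (fA w, fB w, fC w)) / Real.log 2
        = ∑ w, (P w - P w * r (fA w, fB w, fC w)) / Real.log 2 := by
          rw [← Finset.sum_div, Finset.sum_sub_distrib, h1]
      _ ≤ _ := Finset.sum_le_sum (fun w _ => key2 w)
  refine le_trans ?_ hfin
  apply div_nonneg _ hlog2.le
  linarith

private lemma MI_pair {X B C : Type} [Fintype X] [Fintype B] [Fintype C]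
    [DecidableEq X] [DecidableEq B] [DecidableEq C]
    (fX : Ω → X) (f : Ω → B) (g : Ω → C) :
    MI P fX (fun w => (f w, g w)) = MI P fX g + CMI P fX f g := by
  simp only [MI, CMI]
  ring

private lemma MI_symm {A B : Type} [Fintype A] [Fintype B] [DecidableEq A] [DecidableEq B]
    (f : Ω → A) (g : Ω → B) : MI P f g = MI P g f := by
  simp only [MI]
  rw [Hof_swap]
  ring

private lemma MI_pair_comm {X B C : Type} [Fintype X] [Fintype B] [Fintype C]
    [DecidableEq X] [DecidableEq B] [DecidableEq C]
    (fX : Ω → X) (f : Ω → B) (g : Ω → C) :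
    MI P fX (fun w => (f w, g w)) = MI P fX (fun w => (g w, f w)) := by
  simp only [MI]
  have e1 : Hof P (fun w => (f w, g w)) = Hof P (fun w => (g w, f w)) := Hof_swap P f g
  have e2 : Hof P (fun w => (fX w, (f w, g w))) = Hof P (fun w => (fX w, (g w, f w))) := by
    have := Hof_recode P (fun w => (fX w, (f w, g w)))
      (fun p => (p.1, (p.2.2, p.2.1)))
      (by
        intro p q h
        obtain ⟨a, b, c⟩ := p
        obtain ⟨a', b', c'⟩ := q
        simp only [Prod.mk.injEq] at h ⊢
        tauto)
    exact this.symm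
  rw [e1, e2]

private lemma MI_le_pair_right {X B C : Type} [Fintype X] [Fintype B] [Fintype C]
    [DecidableEq X] [DecidableEq B] [DecidableEq C]
    (h0 : ∀ w, 0 ≤ P w) (h1 : ∑ w, P w = 1)
    (fX : Ω → X) (f : Ω → B) (g : Ω → C) :
    MI P fX g ≤ MI P fX (fun w => (f w, g w)) := by
  rw [MI_pair]
  have := CMI_nonneg P h0 h1 fX f g
  linarith

private lemma MI_le_pair_left {X B C : Type} [Fintype X] [Fintype B] [Fintype C]
    [DecidableEq X] [DecidableEq B] [DecidableEq C]
    (h0 : ∀ w, 0 ≤ P w) (h1 : ∑ w, P w = 1)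
    (fX : Ω → X) (f : Ω → B) (g : Ω → C) :
    MI P fX f ≤ MI P fX (fun w => (f w, g w)) := by
  rw [MI_pair_comm]
  exact MI_le_pair_right P h0 h1 fX g f

private lemma MI_split {A B C : Type} [Fintype A] [Fintype B] [Fintype C]
    [DecidableEq A] [DecidableEq B] [DecidableEq C]
    (fA : Ω → A) (fB : Ω → B) (g : Ω → C) :
    MI P (fun w => (fA w, fB w)) g = MI P fA g + CMI P fB g fA := by
  simp only [MI, CMI]
  have e1 : Hof P (fun w => (fB w, fA w)) = Hof P (fun w => (fA w, fB w)) :=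
    Hof_swap P fB fA
  have e2 : Hof P (fun w => (g w, fA w)) = Hof P (fun w => (fA w, g w)) :=
    Hof_swap P g fA
  have e3 : Hof P (fun w => (fB w, (g w, fA w))) = Hof P (fun w => ((fA w, fB w), g w)) := by
    have := Hof_recode P (fun w => (fB w, (g w, fA w)))
      (fun p => ((p.2.2, p.1), p.2.1))
      (by
        intro p q h
        obtain ⟨a, b, c⟩ := p
        obtain ⟨a', b', c'⟩ := q
        simp only [Prod.mk.injEq] at h ⊢
        tauto)
    exact this.symm
  rw [e1, e2] at *
  linarith [e3]

private lemma MI_le_Hof {A B : Type} [Fintype A] [Fintype B] [DecidableEq A] [DecidableEq B]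
    (h0 : ∀ w, 0 ≤ P w) (f : Ω → A) (g : Ω → B) :
    MI P f g ≤ Hof P g := by
  simp only [MI]
  have := Hof_le_pair P h0 f g
  linarith

end ICAux

/-- **The information causality inequality.** For finite random variables
`X₀, X₁, M, Y₀, Y₁` with `X₀` and `X₁` independent, `I(X₀:X₁) = 0`, and the Markov
(data-processing) condition `(X₀,X₁) ⊥ (Y₀,Y₁) | M`, i.e. `I(X₀X₁:Y₀Y₁|M) = 0`, one has
`I(X₀:Y₀) + I(X₁:Y₁) ≤ H(M)`. -/
theorem information_causality {TX₀ TX₁ TM TY₀ TY₁ : Type}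
    [Fintype TX₀] [Fintype TX₁] [Fintype TM] [Fintype TY₀] [Fintype TY₁]
    [DecidableEq TX₀] [DecidableEq TX₁] [DecidableEq TM] [DecidableEq TY₀] [DecidableEq TY₁]
    (P : TX₀ × TX₁ × TM × TY₀ × TY₁ → ℝ)
    (h0 : ∀ w, 0 ≤ P w) (h1 : ∑ w, P w = 1)
    (hindep : MI P (fun w => w.1) (fun w => w.2.1) = 0)
    (hmarkov : CMI P (fun w => (w.1, w.2.1))
      (fun w => (w.2.2.2.1, w.2.2.2.2)) (fun w => w.2.2.1) = 0) :
    MI P (fun w => w.1) (fun w => w.2.2.2.1) +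
      MI P (fun w => w.2.1) (fun w => w.2.2.2.2) ≤
      Hof P (fun w => w.2.2.1) := by
  -- abbreviations (purely notational; every statement below uses explicit lambdas)
  -- s1 : I(X₀:Y₀) ≤ I(X₀:Y₀Y₁)
  have s1 : MI P (fun w => w.1) (fun w => w.2.2.2.1) ≤
      MI P (fun w => w.1) (fun w => (w.2.2.2.1, w.2.2.2.2)) :=
    MI_le_pair_left P h0 h1 (fun w => w.1) (fun w => w.2.2.2.1) (fun w => w.2.2.2.2)
  -- s2 : I(X₁:Y₁) ≤ I(X₁:Y₀Y₁)
  have s2 : MI P (fun w => w.2.1) (fun w => w.2.2.2.2) ≤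
      MI P (fun w => w.2.1) (fun w => (w.2.2.2.1, w.2.2.2.2)) :=
    MI_le_pair_right P h0 h1 (fun w => w.2.1) (fun w => w.2.2.2.1) (fun w => w.2.2.2.2)
  -- s3 : I(X₁:Y₀Y₁) ≤ I(X₁:(Y₀Y₁,X₀))
  have s3 : MI P (fun w => w.2.1) (fun w => (w.2.2.2.1, w.2.2.2.2)) ≤
      MI P (fun w => w.2.1) (fun w => ((w.2.2.2.1, w.2.2.2.2), w.1)) :=
    MI_le_pair_left P h0 h1 (fun w => w.2.1)
      (fun w => (w.2.2.2.1, w.2.2.2.2)) (fun w => w.1)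
  -- s4 : chain rule
  have s4 : MI P (fun w => w.2.1) (fun w => ((w.2.2.2.1, w.2.2.2.2), w.1)) =
      MI P (fun w => w.2.1) (fun w => w.1) +
        CMI P (fun w => w.2.1) (fun w => (w.2.2.2.1, w.2.2.2.2)) (fun w => w.1) :=
    MI_pair P (fun w => w.2.1) (fun w => (w.2.2.2.1, w.2.2.2.2)) (fun w => w.1)
  -- s5 : independence
  have s5 : MI P (fun w => w.2.1) (fun w => w.1) = 0 := by
    rw [MI_symm]
    exact hindep
  -- s6 : chain rule for I(X₀X₁ : Y₀Y₁)
  have s6 : MI P (fun w => (w.1, w.2.1)) (fun w => (w.2.2.2.1, w.2.2.2.2)) =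
      MI P (fun w => w.1) (fun w => (w.2.2.2.1, w.2.2.2.2)) +
        CMI P (fun w => w.2.1) (fun w => (w.2.2.2.1, w.2.2.2.2)) (fun w => w.1) :=
    MI_split P (fun w => w.1) (fun w => w.2.1) (fun w => (w.2.2.2.1, w.2.2.2.2))
  -- s7 : I(X₀X₁ : Y₀Y₁) ≤ I(X₀X₁ : (Y₀Y₁, M))
  have s7 : MI P (fun w => (w.1, w.2.1)) (fun w => (w.2.2.2.1, w.2.2.2.2)) ≤
      MI P (fun w => (w.1, w.2.1)) (fun w => ((w.2.2.2.1, w.2.2.2.2), w.2.2.1)) :=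
    MI_le_pair_left P h0 h1 (fun w => (w.1, w.2.1))
      (fun w => (w.2.2.2.1, w.2.2.2.2)) (fun w => w.2.2.1)
  -- s8 : chain rule with the Markov condition
  have s8 : MI P (fun w => (w.1, w.2.1)) (fun w => ((w.2.2.2.1, w.2.2.2.2), w.2.2.1)) =
      MI P (fun w => (w.1, w.2.1)) (fun w => w.2.2.1) +
        CMI P (fun w => (w.1, w.2.1)) (fun w => (w.2.2.2.1, w.2.2.2.2)) (fun w => w.2.2.1) :=
    MI_pair P (fun w => (w.1, w.2.1)) (fun w => (w.2.2.2.1, w.2.2.2.2)) (fun w => w.2.2.1)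
  -- s9 : I(X₀X₁ : M) ≤ H(M)
  have s9 : MI P (fun w => (w.1, w.2.1)) (fun w => w.2.2.1) ≤
      Hof P (fun w => w.2.2.1) :=
    MI_le_Hof P h0 (fun w => (w.1, w.2.1)) (fun w => w.2.2.1)
  linarith [hmarkov]
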